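/- Let H1 and H2 be complex Hilbert spaces with H2 finite-dimensional, and let m : S_2(H1) × S_2(H2) → ℂ be a bounded bilinear form. Then for every pair of sequences (S_i), (S̃_j) in the closed unit ball of S_2(H1) and every pair of sequences (T_i), (T̃_j) in the closed unit ball of S_2(H2) such that the iterated limits lim_i lim_j m(S_i S̃_j, T_i T̃_j) and lim_j lim_i m(S_i S̃_j, T_i T̃_j) both exist, there exist S, S̃ ∈ S_2(H1) that are weak limits of subsequences of (S_i) and (S̃_j) respectively, and T, T̃ ∈ S_2(H2) that are norm limits of subsequences of (T_i) and (T̃_j) respectively, such that both iterated limits equal m(S S̃, T T̃). In particular, m is biregular. -/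

import Mathlib

open Filter Topology

noncomputable section

variable (H : Type) [NormedAddCommGroup H] [InnerProductSpace ℂ H] [CompleteSpace H]

/-- The index set of a fixed Hilbert basis of `H`. -/
def hsIdx : Set H := (exists_hilbertBasis ℂ H).choose

/-- A fixed Hilbert basis of `H`. -/
def hsBasis : HilbertBasis (hsIdx H) ℂ H := (exists_hilbertBasis ℂ H).choose_spec.choose

variable {H}

/-- `T` is a Hilbert–Schmidt operator, i.e. `T ∈ S_2(H)`. -/
def IsHS (T : H →L[ℂ] H) : Prop := Summable fun i => ‖T (hsBasis H i)‖ ^ 2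

/-- The Hilbert–Schmidt norm `‖T‖₂ = (Tr (T* T))^(1/2)`. -/
def hsNorm (T : H →L[ℂ] H) : ℝ := Real.sqrt (∑' i, ‖T (hsBasis H i)‖ ^ 2)

/-- The Hilbert–Schmidt inner product `⟨S, T⟩ = Tr (T* S)` (linear in `S`,
conjugate-linear in `T`). -/
def hsInner (S T : H →L[ℂ] H) : ℂ := ∑' i, inner ℂ (T (hsBasis H i)) (S (hsBasis H i))

-- Part A : basic lemmas
section PartA

lemma isHS_zero : IsHS (0 : H →L[ℂ] H) := by
  simp [IsHS, summable_zero]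

lemma IsHS.add {T T' : H →L[ℂ] H} (hT : IsHS T) (hT' : IsHS T') : IsHS (T + T') := by
  have h : ∀ i : hsIdx H, ‖(T + T') (hsBasis H i)‖ ^ 2 ≤
      2 * ‖T (hsBasis H i)‖ ^ 2 + 2 * ‖T' (hsBasis H i)‖ ^ 2 := by
    intro i
    have h1 : ‖(T + T') (hsBasis H i)‖ ≤ ‖T (hsBasis H i)‖ + ‖T' (hsBasis H i)‖ := by
      simpa using norm_add_le (T (hsBasis H i)) (T' (hsBasis H i))
    nlinarith [norm_nonneg ((T + T') (hsBasis H i)), norm_nonneg (T (hsBasis H i)),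
      norm_nonneg (T' (hsBasis H i)), sq_nonneg (‖T (hsBasis H i)‖ - ‖T' (hsBasis H i)‖)]
  exact Summable.of_nonneg_of_le (fun i => sq_nonneg _) h
    (((hT.mul_left 2).add (hT'.mul_left 2)))

lemma IsHS.smul (c : ℂ) {T : H →L[ℂ] H} (hT : IsHS T) : IsHS (c • T) := by
  have : (fun i : hsIdx H => ‖(c • T) (hsBasis H i)‖ ^ 2)
      = fun i => ‖c‖ ^ 2 * ‖T (hsBasis H i)‖ ^ 2 := by
    funext i; simp [norm_smul, mul_pow]
  rw [IsHS, this]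
  exact hT.mul_left _

lemma IsHS.neg {T : H →L[ℂ] H} (hT : IsHS T) : IsHS (-T) := by
  have := hT.smul (-1 : ℂ); simpa using this

lemma IsHS.sub {T T' : H →L[ℂ] H} (hT : IsHS T) (hT' : IsHS T') : IsHS (T - T') := by
  simpa [sub_eq_add_neg] using hT.add hT'.neg

lemma IsHS.comp_left (A : H →L[ℂ] H) {T : H →L[ℂ] H} (hT : IsHS T) : IsHS (A * T) := by
  refine Summable.of_nonneg_of_le (fun i => sq_nonneg _) (fun i => ?_) (hT.mul_left (‖A‖ ^ 2))
  have h1 : ‖(A * T) (hsBasis H i)‖ ≤ ‖A‖ * ‖T (hsBasis H i)‖ := A.le_opNorm _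
  calc ‖(A * T) (hsBasis H i)‖ ^ 2 ≤ (‖A‖ * ‖T (hsBasis H i)‖) ^ 2 := by
        exact pow_le_pow_left₀ (norm_nonneg _) h1 2
    _ = ‖A‖ ^ 2 * ‖T (hsBasis H i)‖ ^ 2 := by ring

lemma hsNorm_nonneg (T : H →L[ℂ] H) : 0 ≤ hsNorm T := Real.sqrt_nonneg _

lemma hsNorm_comp_le (A : H →L[ℂ] H) {T : H →L[ℂ] H} (hT : IsHS T) :
    hsNorm (A * T) ≤ ‖A‖ * hsNorm T := by
  rw [hsNorm, hsNorm]
  have h : (∑' i : hsIdx H, ‖(A * T) (hsBasis H i)‖ ^ 2)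
      ≤ ∑' i : hsIdx H, ‖A‖ ^ 2 * ‖T (hsBasis H i)‖ ^ 2 := by
    refine Summable.tsum_le_tsum (fun i => ?_) (hT.comp_left A) (hT.mul_left _)
    have h1 : ‖(A * T) (hsBasis H i)‖ ≤ ‖A‖ * ‖T (hsBasis H i)‖ := A.le_opNorm _
    calc ‖(A * T) (hsBasis H i)‖ ^ 2 ≤ (‖A‖ * ‖T (hsBasis H i)‖) ^ 2 :=
          pow_le_pow_left₀ (norm_nonneg _) h1 2
      _ = ‖A‖ ^ 2 * ‖T (hsBasis H i)‖ ^ 2 := by ring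
  calc Real.sqrt (∑' i : hsIdx H, ‖(A * T) (hsBasis H i)‖ ^ 2)
      ≤ Real.sqrt (∑' i : hsIdx H, ‖A‖ ^ 2 * ‖T (hsBasis H i)‖ ^ 2) := Real.sqrt_le_sqrt h
    _ = ‖A‖ * Real.sqrt (∑' i : hsIdx H, ‖T (hsBasis H i)‖ ^ 2) := by
        rw [tsum_mul_left, Real.sqrt_mul (sq_nonneg _), Real.sqrt_sq (norm_nonneg _)]

/-- Parseval: the coefficients of `x` square-sum to `‖x‖ ^ 2`. -/
lemma hs_parseval (x : H) :
    HasSum (fun i : hsIdx H => ‖(inner ℂ (hsBasis H i) x : ℂ)‖ ^ 2) (‖x‖ ^ 2) := by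
  have h := (hsBasis H).hasSum_inner_mul_inner x x
  have h2 := h.mapL Complex.reCLM
  have heq : (fun i : hsIdx H =>
      Complex.reCLM ((inner ℂ x (hsBasis H i) : ℂ) * inner ℂ (hsBasis H i) x))
      = fun i : hsIdx H => ‖(inner ℂ (hsBasis H i) x : ℂ)‖ ^ 2 := by
    funext i
    have : (inner ℂ x (hsBasis H i) : ℂ) = starRingEnd ℂ (inner ℂ (hsBasis H i) x) :=
      (inner_conj_symm _ _).symm
    rw [this, RCLike.conj_mul]
    simp [← Complex.ofReal_pow]
  have heq2 : Complex.reCLM (inner ℂ x x : ℂ) = ‖x‖ ^ 2 := by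
    simpa using inner_self_eq_norm_sq (𝕜 := ℂ) x
  rw [heq, heq2] at h2
  exact h2

lemma hs_parseval_summable (x : H) :
    Summable (fun i : hsIdx H => ‖(inner ℂ (hsBasis H i) x : ℂ)‖ ^ 2) := (hs_parseval x).summable

lemma hs_parseval_tsum (x : H) :
    ∑' i : hsIdx H, ‖(inner ℂ (hsBasis H i) x : ℂ)‖ ^ 2 = ‖x‖ ^ 2 := (hs_parseval x).tsum_eq

end PartA

-- Part B : lp model
section PartB

/-- Cauchy--Schwarz for infinite sums of nonnegative reals. -/
lemma tsum_cs {ι : Type} (f g : ι → ℝ) (hf0 : ∀ i, 0 ≤ f i) (hg0 : ∀ i, 0 ≤ g i)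
    (hf : Summable fun i => f i ^ 2) (hg : Summable fun i => g i ^ 2) :
    Summable (fun i => f i * g i) ∧
      ∑' i, f i * g i ≤ Real.sqrt (∑' i, f i ^ 2) * Real.sqrt (∑' i, g i ^ 2) := by
  have hsum : Summable (fun i => f i * g i) := by
    refine Summable.of_nonneg_of_le (fun i => mul_nonneg (hf0 i) (hg0 i)) (fun i => ?_)
      (((hf.add hg).mul_left (1/2)))
    nlinarith [sq_nonneg (f i - g i)]
  refine ⟨hsum, ?_⟩
  refine Summable.tsum_le_of_sum_le hsum (fun s => ?_)
  have h1 : (∑ i ∈ s, f i * g i) ^ 2 ≤ (∑ i ∈ s, f i ^ 2) * ∑ i ∈ s, g i ^ 2 :=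
    Finset.sum_mul_sq_le_sq_mul_sq s f g
  have h2 : (∑ i ∈ s, f i ^ 2) ≤ ∑' i, f i ^ 2 := Summable.sum_le_tsum s (fun i _ => sq_nonneg _) hf
  have h3 : (∑ i ∈ s, g i ^ 2) ≤ ∑' i, g i ^ 2 := Summable.sum_le_tsum s (fun i _ => sq_nonneg _) hg
  have h0 : (0:ℝ) ≤ ∑ i ∈ s, f i * g i :=
    Finset.sum_nonneg fun i _ => mul_nonneg (hf0 i) (hg0 i)
  have h4 : (∑ i ∈ s, f i * g i) ^ 2 ≤ (∑' i, f i ^ 2) * ∑' i, g i ^ 2 := by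
    refine h1.trans (mul_le_mul h2 h3 (Finset.sum_nonneg fun i _ => sq_nonneg _) ?_)
    exact le_trans (Finset.sum_nonneg fun i _ => sq_nonneg _) h2
  calc ∑ i ∈ s, f i * g i = Real.sqrt ((∑ i ∈ s, f i * g i) ^ 2) := (Real.sqrt_sq h0).symm
    _ ≤ Real.sqrt ((∑' i, f i ^ 2) * ∑' i, g i ^ 2) := Real.sqrt_le_sqrt h4
    _ = Real.sqrt (∑' i, f i ^ 2) * Real.sqrt (∑' i, g i ^ 2) := by
        rw [Real.sqrt_mul (tsum_nonneg fun i => sq_nonneg (f i))]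

variable {H : Type} [NormedAddCommGroup H] [InnerProductSpace ℂ H] [CompleteSpace H]

lemma lp_two_summable_iff {ι : Type} {G : ι → Type} [∀ i, NormedAddCommGroup (G i)]
    (f : ∀ i, G i) : Memℓp f 2 ↔ Summable fun i => ‖f i‖ ^ 2 := by
  rw [memℓp_gen_iff (by norm_num : 0 < ENNReal.toReal 2)]
  simp_rw [show ENNReal.toReal 2 = ((2:ℕ):ℝ) by norm_num, Real.rpow_natCast]

lemma lp_norm_eq_sqrt {ι : Type} {G : ι → Type} [∀ i, NormedAddCommGroup (G i)]
    (f : lp G 2) : ‖f‖ = Real.sqrt (∑' i, ‖f i‖ ^ 2) := by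
  rw [lp.norm_eq_tsum_rpow (by norm_num : 0 < ENNReal.toReal 2) f]
  simp_rw [show ENNReal.toReal 2 = ((2:ℕ):ℝ) by norm_num, Real.rpow_natCast,
    Real.sqrt_eq_rpow]
  norm_num

lemma hs_memℓp {T : H →L[ℂ] H} (hT : IsHS T) :
    Memℓp (fun i : hsIdx H => T (hsBasis H i)) 2 :=
  (lp_two_summable_iff _).2 hT

/-- The canonical image of a Hilbert–Schmidt operator in `ℓ²(ι, H)`. -/
def hsΦ {T : H →L[ℂ] H} (hT : IsHS T) : lp (fun _ : hsIdx H => H) 2 :=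
  ⟨fun i => T (hsBasis H i), hs_memℓp hT⟩

@[simp] lemma hsΦ_apply {T : H →L[ℂ] H} (hT : IsHS T) (i : hsIdx H) :
    hsΦ hT i = T (hsBasis H i) := rfl

lemma hsNorm_eq {T : H →L[ℂ] H} (hT : IsHS T) : hsNorm T = ‖hsΦ hT‖ := by
  rw [lp_norm_eq_sqrt, hsNorm]; rfl

lemma hsInner_eq {S T : H →L[ℂ] H} (hS : IsHS S) (hT : IsHS T) :
    hsInner S T = inner ℂ (hsΦ hT) (hsΦ hS) := by
  rw [lp.inner_eq_tsum, hsInner]; rfl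

/-- The operator norm is dominated by the Hilbert–Schmidt norm. -/
lemma opNorm_le_hsNorm {T : H →L[ℂ] H} (hT : IsHS T) : ‖T‖ ≤ hsNorm T := by
  refine T.opNorm_le_bound (hsNorm_nonneg T) (fun x => ?_)
  have hrep : HasSum (fun i : hsIdx H => (hsBasis H).repr x i • (hsBasis H) i) x :=
    (hsBasis H).hasSum_repr x
  have hTx : HasSum (fun i : hsIdx H => (hsBasis H).repr x i • T ((hsBasis H) i)) (T x) := by
    have := hrep.mapL T
    simpa using this
  have hu : Summable fun i : hsIdx H => ‖(hsBasis H).repr x i‖ ^ 2 := by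
    have h := lp.memℓp ((hsBasis H).repr x)
    rw [lp_two_summable_iff] at h
    exact h
  have hu' : Summable fun i : hsIdx H => ‖((hsBasis H).repr x i : ℂ)‖ ^ 2 := hu
  obtain ⟨hsummul, hcs⟩ := tsum_cs (fun i : hsIdx H => ‖(hsBasis H).repr x i‖)
    (fun i => ‖T ((hsBasis H) i)‖) (fun i => norm_nonneg _) (fun i => norm_nonneg _) hu' hT
  have hsum_norm : Summable (fun i : hsIdx H => ‖(hsBasis H).repr x i • T ((hsBasis H) i)‖) := by
    simpa [norm_smul] using hsummul
  have hnorm_le : ‖T x‖ ≤ ∑' i : hsIdx H, ‖(hsBasis H).repr x i‖ * ‖T ((hsBasis H) i)‖ := by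
    calc ‖T x‖ = ‖∑' i : hsIdx H, (hsBasis H).repr x i • T ((hsBasis H) i)‖ := by
          rw [hTx.tsum_eq]
      _ ≤ ∑' i : hsIdx H, ‖(hsBasis H).repr x i • T ((hsBasis H) i)‖ :=
          norm_tsum_le_tsum_norm hsum_norm
      _ = ∑' i : hsIdx H, ‖(hsBasis H).repr x i‖ * ‖T ((hsBasis H) i)‖ :=
          tsum_congr fun i => norm_smul _ _
  have hxnorm : Real.sqrt (∑' i : hsIdx H, ‖(hsBasis H).repr x i‖ ^ 2) = ‖x‖ := by
    have h : ∑' i : hsIdx H, ‖((hsBasis H).repr x i : ℂ)‖ ^ 2 = ‖x‖ ^ 2 := by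
      rw [← hs_parseval_tsum (H := H) x]
      refine tsum_congr fun i => ?_
      rw [(hsBasis H).repr_apply_apply x i]
    rw [h, Real.sqrt_sq (norm_nonneg x)]
  calc ‖T x‖ ≤ ∑' i : hsIdx H, ‖(hsBasis H).repr x i‖ * ‖T ((hsBasis H) i)‖ := hnorm_le
    _ ≤ Real.sqrt (∑' i : hsIdx H, ‖(hsBasis H).repr x i‖ ^ 2) *
        Real.sqrt (∑' i : hsIdx H, ‖T ((hsBasis H) i)‖ ^ 2) := hcs
    _ = hsNorm T * ‖x‖ := by rw [hxnorm, hsNorm, mul_comm]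

end PartB

-- Part C : adjoints and trace commutation
section PartC
variable {H : Type} [NormedAddCommGroup H] [InnerProductSpace ℂ H] [CompleteSpace H]

lemma summable_sq_prod {R : H →L[ℂ] H} (hR : IsHS R) :
    Summable fun p : hsIdx H × hsIdx H =>
      ‖(inner ℂ (hsBasis H p.1) (R (hsBasis H p.2)) : ℂ)‖ ^ 2 := by
  have h2 : Summable fun p : hsIdx H × hsIdx H =>
      ‖(inner ℂ (hsBasis H p.2) (R (hsBasis H p.1)) : ℂ)‖ ^ 2 := by
    refine (summable_prod_of_nonneg (fun p => sq_nonneg _)).2 ⟨fun k => ?_, ?_⟩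
    · exact (hs_parseval (R (hsBasis H k))).summable
    · refine hR.congr fun k => ?_
      exact (hs_parseval_tsum (R (hsBasis H k))).symm
  have h3 := h2.prod_symm
  exact h3

lemma IsHS.adjoint {T : H →L[ℂ] H} (hT : IsHS T) : IsHS (ContinuousLinearMap.adjoint T) := by
  have hprod : Summable fun p : hsIdx H × hsIdx H =>
      ‖(inner ℂ (hsBasis H p.1) (T (hsBasis H p.2)) : ℂ)‖ ^ 2 := summable_sq_prod hT
  have hG : Summable fun p : hsIdx H × hsIdx H =>
      ‖(inner ℂ (hsBasis H p.2) ((ContinuousLinearMap.adjoint T) (hsBasis H p.1)) : ℂ)‖ ^ 2 := by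
    refine hprod.congr fun p => ?_
    rw [ContinuousLinearMap.adjoint_inner_right]
    rw [norm_inner_symm]
  have hrows := ((summable_prod_of_nonneg (fun p => sq_nonneg _)).1 hG).2
  refine hrows.congr fun i => ?_
  exact hs_parseval_tsum ((ContinuousLinearMap.adjoint T) (hsBasis H i))

lemma IsHS.comp_right {S : H →L[ℂ] H} (B : H →L[ℂ] H) (hS : IsHS S) : IsHS (S * B) := by
  have h1 : IsHS (ContinuousLinearMap.adjoint B * ContinuousLinearMap.adjoint S) :=
    hS.adjoint.comp_left _
  have h2 := h1.adjoint
  rw [ContinuousLinearMap.mul_def, ContinuousLinearMap.adjoint_comp,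
    ContinuousLinearMap.adjoint_adjoint, ContinuousLinearMap.adjoint_adjoint] at h2
  exact h2

/-- Trace commutation for two Hilbert–Schmidt operators. -/
lemma hsTr_comm {P Q : H →L[ℂ] H} (hP : IsHS P) (hQ : IsHS Q) :
    ∑' i : hsIdx H, (inner ℂ (hsBasis H i) (P (Q (hsBasis H i))) : ℂ)
      = ∑' i : hsIdx H, (inner ℂ (hsBasis H i) (Q (P (hsBasis H i))) : ℂ) := by
  set b := hsBasis H with hb
  set F : hsIdx H × hsIdx H → ℂ :=
    fun p => (inner ℂ (b p.1) (P (b p.2)) : ℂ) * (inner ℂ (b p.2) (Q (b p.1)) : ℂ) with hF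
  have hQsw : Summable fun p : hsIdx H × hsIdx H => ‖(inner ℂ (b p.2) (Q (b p.1)) : ℂ)‖ ^ 2 :=
    (summable_sq_prod hQ).prod_symm
  have hFsum : Summable F := by
    refine Summable.of_norm ?_
    refine Summable.of_nonneg_of_le (fun p => norm_nonneg _) (fun p => ?_)
      (((summable_sq_prod hP).add hQsw).mul_left (1/2))
    rw [hF]
    simp only [norm_mul]
    nlinarith [norm_nonneg ((inner ℂ (b p.1) (P (b p.2)) : ℂ)),
      norm_nonneg ((inner ℂ (b p.2) (Q (b p.1)) : ℂ)),
      sq_nonneg (‖(inner ℂ (b p.1) (P (b p.2)) : ℂ)‖ - ‖(inner ℂ (b p.2) (Q (b p.1)) : ℂ)‖)]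
  have step1 : ∀ i : hsIdx H, (inner ℂ (b i) (P (Q (b i))) : ℂ) = ∑' k : hsIdx H, F (i, k) := by
    intro i
    have h1 : (inner ℂ (b i) (P (Q (b i))) : ℂ)
        = inner ℂ ((ContinuousLinearMap.adjoint P) (b i)) (Q (b i)) :=
      (ContinuousLinearMap.adjoint_inner_left P (Q (b i)) (b i)).symm
    rw [h1, ← b.tsum_inner_mul_inner ((ContinuousLinearMap.adjoint P) (b i)) (Q (b i))]
    refine tsum_congr fun k => ?_
    rw [hF]
    simp only []
    rw [ContinuousLinearMap.adjoint_inner_left P (b k) (b i)]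
  have step2 : ∀ k : hsIdx H, (inner ℂ (b k) (Q (P (b k))) : ℂ) = ∑' i : hsIdx H, F (i, k) := by
    intro k
    have h1 : (inner ℂ (b k) (Q (P (b k))) : ℂ)
        = inner ℂ ((ContinuousLinearMap.adjoint Q) (b k)) (P (b k)) :=
      (ContinuousLinearMap.adjoint_inner_left Q (P (b k)) (b k)).symm
    rw [h1, ← b.tsum_inner_mul_inner ((ContinuousLinearMap.adjoint Q) (b k)) (P (b k))]
    refine tsum_congr fun i => ?_
    rw [hF]
    simp only []
    rw [ContinuousLinearMap.adjoint_inner_left Q (b i) (b k)]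
    ring
  calc ∑' i : hsIdx H, (inner ℂ (b i) (P (Q (b i))) : ℂ) = ∑' i : hsIdx H, ∑' k : hsIdx H, F (i, k) :=
        tsum_congr step1
    _ = ∑' k : hsIdx H, ∑' i : hsIdx H, F (i, k) := by
        exact (Summable.tsum_comm (f := fun i k => F (i, k)) hFsum).symm
    _ = ∑' k : hsIdx H, (inner ℂ (b k) (Q (P (b k))) : ℂ) := (tsum_congr step2).symm

lemma hsInner_mul_left (A : H →L[ℂ] H) {S W : H →L[ℂ] H} :
    hsInner (A * S) W = hsInner S (ContinuousLinearMap.adjoint A * W) := by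
  refine tsum_congr fun i => ?_
  simp only [ContinuousLinearMap.mul_apply]
  exact (ContinuousLinearMap.adjoint_inner_left A (S (hsBasis H i)) (W (hsBasis H i))).symm

lemma hsInner_mul_right (B : H →L[ℂ] H) {S W : H →L[ℂ] H} (hS : IsHS S) (hW : IsHS W) :
    hsInner (S * B) W = hsInner S (W * ContinuousLinearMap.adjoint B) := by
  set b := hsBasis H with hb
  have lhs1 : hsInner (S * B) W
      = ∑' i : hsIdx H, (inner ℂ (b i) ((ContinuousLinearMap.adjoint W) ((S * B) (b i))) : ℂ) := by
    refine tsum_congr fun i => ?_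
    exact (ContinuousLinearMap.adjoint_inner_right W (b i) ((S * B) (b i))).symm
  have lhs2 := hsTr_comm (P := ContinuousLinearMap.adjoint W) (Q := S * B)
    hW.adjoint (hS.comp_right B)
  have lhs3 : ∑' i : hsIdx H, (inner ℂ (b i) ((S * B) ((ContinuousLinearMap.adjoint W) (b i))) : ℂ)
      = ∑' i : hsIdx H,
        (inner ℂ (b i) ((B * ContinuousLinearMap.adjoint W) (S (b i))) : ℂ) := by
    have := hsTr_comm (P := S) (Q := B * ContinuousLinearMap.adjoint W)
      hS (hW.adjoint.comp_left B)
    rw [← this]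
    rfl
  have rhs1 : hsInner S (W * ContinuousLinearMap.adjoint B)
      = ∑' i : hsIdx H,
        (inner ℂ (b i) ((B * ContinuousLinearMap.adjoint W) (S (b i))) : ℂ) := by
    refine tsum_congr fun i => ?_
    simp only [ContinuousLinearMap.mul_apply]
    rw [← ContinuousLinearMap.adjoint_inner_right W]
    rw [ContinuousLinearMap.adjoint_inner_left B]
  rw [lhs1, rhs1, ← lhs3, ← lhs2]

end PartC

-- Part D : the Hilbert-Schmidt subspace of ℓ², Riesz representation, weak compactness
section PartD
variable {H : Type} [NormedAddCommGroup H] [InnerProductSpace ℂ H] [CompleteSpace H]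

lemma hs_ext {T T' : H →L[ℂ] H} (h : ∀ i : hsIdx H, T (hsBasis H i) = T' (hsBasis H i)) :
    T = T' := by
  have hd : Dense ((Submodule.span ℂ (Set.range ⇑(hsBasis H)) : Submodule ℂ H) : Set H) :=
    Submodule.dense_iff_topologicalClosure_eq_top.mpr ((hsBasis H).dense_span)
  refine ContinuousLinearMap.ext_on hd ?_
  rintro _ ⟨i, rfl⟩
  exact h i

variable (H) in
/-- The image of the Hilbert–Schmidt operators inside `ℓ²(ι, H)`, as a submodule. -/
def hsSub : Submodule ℂ (lp (fun _ : hsIdx H => H) 2) where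
  carrier := {f | ∃ T : H →L[ℂ] H, IsHS T ∧ ∀ i, f i = T (hsBasis H i)}
  add_mem' := by
    rintro f g ⟨T, hT, hf⟩ ⟨T', hT', hg⟩
    exact ⟨T + T', hT.add hT', fun i => by
      rw [lp.coeFn_add]; simp [hf i, hg i]⟩
  zero_mem' := ⟨0, isHS_zero, fun i => by rw [lp.coeFn_zero]; simp⟩
  smul_mem' := by
    rintro c f ⟨T, hT, hf⟩
    exact ⟨c • T, hT.smul c, fun i => by rw [lp.coeFn_smul]; simp [hf i]⟩

lemma hsΦ_mem {T : H →L[ℂ] H} (hT : IsHS T) : (hsΦ hT : lp (fun _ : hsIdx H => H) 2) ∈ hsSub H :=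
  ⟨T, hT, fun i => rfl⟩

lemma hsSub_isClosed : IsClosed ((hsSub H : Set (lp (fun _ : hsIdx H => H) 2))) := by
  rw [← isSeqClosed_iff_isClosed]
  intro f f₀ hfK hf
  -- each f n comes from an operator
  choose T hT hTf using hfK
  -- the operators form a Cauchy sequence for the operator norm
  have hcauchyf : CauchySeq f := hf.cauchySeq
  have hkey : ∀ p q : ℕ, ‖T p - T q‖ ≤ ‖f p - f q‖ := by
    intro p q
    have hsub : IsHS (T p - T q) := (hT p).sub (hT q)
    refine (opNorm_le_hsNorm hsub).trans ?_
    rw [hsNorm_eq hsub]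
    have : hsΦ hsub = f p - f q := by
      ext i
      rw [lp.coeFn_sub]
      simp [hTf p i, hTf q i]
    rw [this]
  have hcauchyT : CauchySeq T := by
    rw [Metric.cauchySeq_iff] at hcauchyf ⊢
    intro ε hε
    obtain ⟨N, hN⟩ := hcauchyf ε hε
    exact ⟨N, fun p hp q hq => lt_of_le_of_lt (by
      rw [dist_eq_norm, dist_eq_norm] at *
      exact hkey p q) (hN p hp q hq)⟩
  obtain ⟨T₀, hT₀⟩ := cauchySeq_tendsto_of_complete hcauchyT
  -- identify coordinates
  have hcoord : ∀ i, f₀ i = T₀ (hsBasis H i) := by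
    intro i
    have h1 : Tendsto (fun n => T n (hsBasis H i)) atTop (𝓝 (T₀ (hsBasis H i))) := by
      have := (ContinuousLinearMap.apply ℂ H (hsBasis H i)).continuous.tendsto T₀
      exact this.comp hT₀
    have h2 : Tendsto (fun n => (f n : ∀ i, H) i) atTop (𝓝 (f₀ i)) := by
      have hb : ∀ n, ‖(f n : ∀ i, H) i - f₀ i‖ ≤ ‖f n - f₀‖ := by
        intro n
        have := lp.norm_apply_le_norm (by norm_num : (2 : ENNReal) ≠ 0) (f n - f₀) i
        rwa [lp.coeFn_sub] at this
      refine tendsto_iff_norm_sub_tendsto_zero.2 ?_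
      refine squeeze_zero (fun n => norm_nonneg _) hb ?_
      simpa using (tendsto_iff_norm_sub_tendsto_zero.1 hf)
    have h3 : Tendsto (fun n => (f n : ∀ i, H) i) atTop (𝓝 (T₀ (hsBasis H i))) := by
      refine h1.congr fun n => ?_
      exact (hTf n i).symm
    exact tendsto_nhds_unique h2 h3
  have hsum : IsHS T₀ := by
    have h := lp.memℓp f₀
    rw [lp_two_summable_iff] at h
    refine h.congr fun i => ?_
    rw [hcoord i]
  show f₀ ∈ hsSub H
  exact ⟨T₀, hsum, hcoord⟩

/-- Riesz representation for bounded-on-HS linear functionals. -/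
lemma hs_riesz {f0 : (H →L[ℂ] H) → ℂ} {C : ℝ}
    (hadd : ∀ A A', IsHS A → IsHS A' → f0 (A + A') = f0 A + f0 A')
    (hsmul : ∀ (c : ℂ) A, IsHS A → f0 (c • A) = c * f0 A)
    (hbd : ∀ A, IsHS A → ‖f0 A‖ ≤ C * hsNorm A) :
    ∃ M, IsHS M ∧ ∀ A, IsHS A → f0 A = hsInner A M := by
  haveI : CompleteSpace (hsSub H) := hsSub_isClosed.completeSpace_coe
  -- the inverse map
  set inv : hsSub H → (H →L[ℂ] H) := fun x => x.2.choose with hinv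
  have hinvHS : ∀ x : hsSub H, IsHS (inv x) := fun x => x.2.choose_spec.1
  have hinvco : ∀ (x : hsSub H) (i : hsIdx H),
      ((x : lp (fun _ : hsIdx H => H) 2) : ∀ _ : hsIdx H, H) i = (inv x) (hsBasis H i) :=
    fun x => x.2.choose_spec.2
  have hinvΦ : ∀ {T : H →L[ℂ] H} (hT : IsHS T), inv ⟨hsΦ hT, hsΦ_mem hT⟩ = T := by
    intro T hT
    refine hs_ext fun i => ?_
    rw [← hinvco ⟨hsΦ hT, hsΦ_mem hT⟩ i]
    rfl
  have hinv_add : ∀ x y : hsSub H, inv (x + y) = inv x + inv y := by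
    intro x y
    refine hs_ext fun i => ?_
    have h1 := hinvco (x + y) i
    have h2 : (((x + y : hsSub H) : lp (fun _ : hsIdx H => H) 2) : ∀ _ : hsIdx H, H) i
        = ((x : lp (fun _ : hsIdx H => H) 2) : ∀ _ : hsIdx H, H) i
          + ((y : lp (fun _ : hsIdx H => H) 2) : ∀ _ : hsIdx H, H) i := rfl
    rw [h2, hinvco x i, hinvco y i] at h1
    simp [← h1]
  have hinv_smul : ∀ (c : ℂ) (x : hsSub H), inv (c • x) = c • inv x := by
    intro c x
    refine hs_ext fun i => ?_
    have h1 := hinvco (c • x) i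
    have h2 : (((c • x : hsSub H) : lp (fun _ : hsIdx H => H) 2) : ∀ _ : hsIdx H, H) i
        = c • ((x : lp (fun _ : hsIdx H => H) 2) : ∀ _ : hsIdx H, H) i := rfl
    rw [h2, hinvco x i] at h1
    simp [← h1]
  have hΦinv : ∀ x : hsSub H, hsΦ (hinvHS x) = (x : lp (fun _ : hsIdx H => H) 2) := by
    intro x
    ext i
    rw [hsΦ_apply, ← hinvco x i]
  -- the continuous linear functional on the subspace
  set Fl : hsSub H →ₗ[ℂ] ℂ :=
    { toFun := fun x => f0 (inv x)
      map_add' := fun x y => by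
        show f0 (inv (x + y)) = f0 (inv x) + f0 (inv y)
        rw [hinv_add]; exact hadd _ _ (hinvHS x) (hinvHS y)
      map_smul' := fun c x => by
        simp only [RingHom.id_apply, smul_eq_mul]
        show f0 (inv (c • x)) = c * f0 (inv x)
        rw [hinv_smul]; exact hsmul c _ (hinvHS x) } with hFl
  have hFlbd : ∀ x : hsSub H, ‖Fl x‖ ≤ (max C 0) * ‖x‖ := by
    intro x
    have h1 : ‖f0 (inv x)‖ ≤ C * hsNorm (inv x) := hbd _ (hinvHS x)
    have h2 : hsNorm (inv x) = ‖x‖ := by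
      rw [hsNorm_eq (hinvHS x), hΦinv x]
      rfl
    calc ‖Fl x‖ = ‖f0 (inv x)‖ := rfl
      _ ≤ C * hsNorm (inv x) := h1
      _ ≤ (max C 0) * hsNorm (inv x) :=
          mul_le_mul_of_nonneg_right (le_max_left _ _) (hsNorm_nonneg _)
      _ = (max C 0) * ‖x‖ := by rw [h2]
  set Fc : hsSub H →L[ℂ] ℂ := Fl.mkContinuous (max C 0) hFlbd with hFc
  set y : hsSub H := (InnerProductSpace.toDual ℂ (hsSub H)).symm Fc with hy
  refine ⟨inv y, hinvHS y, fun A hA => ?_⟩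
  have h1 : (inner ℂ y ⟨hsΦ hA, hsΦ_mem hA⟩ : ℂ) = Fc ⟨hsΦ hA, hsΦ_mem hA⟩ :=
    InnerProductSpace.toDual_symm_apply
  have h2 : Fc ⟨hsΦ hA, hsΦ_mem hA⟩ = f0 A := by
    show f0 (inv ⟨hsΦ hA, hsΦ_mem hA⟩) = f0 A
    rw [hinvΦ hA]
  rw [← h2, ← h1]
  rw [hsInner_eq hA (hinvHS y), Submodule.coe_inner]
  congr 1
  exact (hΦinv y).symm
end PartD

-- Part E : weak sequential compactness of the unit ball of a Hilbert space
section PartE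

open Submodule in
/-- Every bounded sequence in a complex Hilbert space has a weakly convergent subsequence. -/
lemma weak_compact_seq {V : Type} [NormedAddCommGroup V] [InnerProductSpace ℂ V]
    [CompleteSpace V] (x : ℕ → V) (hx : ∀ n, ‖x n‖ ≤ 1) :
    ∃ (y : V) (φ : ℕ → ℕ), StrictMono φ ∧
      ∀ w : V, Tendsto (fun n => (inner ℂ w (x (φ n)) : ℂ)) atTop (𝓝 (inner ℂ w y)) := by
  classical
  set D : Submodule ℂ V := (Submodule.span ℂ (Set.range x)).topologicalClosure with hD
  have hDclosed : IsClosed (D : Set V) := Submodule.isClosed_topologicalClosure _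
  haveI : CompleteSpace D := hDclosed.completeSpace_coe
  -- D is separable
  have hsep : TopologicalSpace.IsSeparable (D : Set V) := by
    have h1 : TopologicalSpace.IsSeparable (Set.range x) := (Set.countable_range x).isSeparable
    have h2 := h1.span (R := ℂ)
    have h3 := h2.closure
    have : (D : Set V) = closure ((Submodule.span ℂ (Set.range x) : Submodule ℂ V) : Set V) :=
      rfl
    rw [this]
    exact h3
  haveI : TopologicalSpace.SeparableSpace (D : Set V) := hsep.separableSpace
  have hmem : ∀ n, x n ∈ D :=
    fun n => (Submodule.le_topologicalClosure _) (Submodule.subset_span (Set.mem_range_self n))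
  set xD : ℕ → D := fun n => ⟨x n, hmem n⟩ with hxD
  haveI : Nonempty D := ⟨0⟩
  obtain ⟨d, hd⟩ := TopologicalSpace.exists_dense_seq D
  -- diagonal extraction via compactness of a product of balls
  set s : Set (ℕ → ℂ) := Set.univ.pi fun m => Metric.closedBall (0:ℂ) ‖d m‖ with hs
  have hscompact : IsCompact s := isCompact_univ_pi fun m => isCompact_closedBall _ _
  set F : ℕ → ℕ → ℂ := fun n m => inner ℂ (xD n) (d m) with hF
  have hFs : ∀ n, F n ∈ s := by
    intro n
    rw [Set.mem_univ_pi]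
    intro m
    rw [Metric.mem_closedBall, dist_zero_right]
    calc ‖(inner ℂ (xD n) (d m) : ℂ)‖ ≤ ‖xD n‖ * ‖d m‖ := norm_inner_le_norm _ _
      _ ≤ 1 * ‖d m‖ := by
          have : ‖xD n‖ = ‖x n‖ := rfl
          exact mul_le_mul_of_nonneg_right (by rw [this]; exact hx n) (norm_nonneg _)
      _ = ‖d m‖ := one_mul _
  obtain ⟨a, -, φ, hφ, hφconv⟩ := hscompact.tendsto_subseq hFs
  have hconv_d : ∀ m, Tendsto (fun n => (inner ℂ (xD (φ n)) (d m) : ℂ)) atTop (𝓝 (a m)) := by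
    intro m
    exact (tendsto_pi_nhds.1 hφconv) m
  -- Cauchy for every w in D
  have hcauchy : ∀ w : D, CauchySeq (fun n => (inner ℂ (xD (φ n)) w : ℂ)) := by
    intro w
    rw [Metric.cauchySeq_iff]
    intro ε hε
    obtain ⟨m, hm⟩ := hd.exists_dist_lt w (show 0 < ε/4 by linarith)
    have hc := (hconv_d m).cauchySeq
    rw [Metric.cauchySeq_iff] at hc
    obtain ⟨N, hN⟩ := hc (ε/4) (by linarith)
    refine ⟨N, fun p hp q hq => ?_⟩
    have key : ∀ r : ℕ, ‖(inner ℂ (xD (φ r)) w : ℂ) - inner ℂ (xD (φ r)) (d m)‖ ≤ ε/4 := by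
      intro r
      rw [← inner_sub_right]
      calc ‖(inner ℂ (xD (φ r)) (w - d m) : ℂ)‖ ≤ ‖xD (φ r)‖ * ‖w - d m‖ :=
            norm_inner_le_norm _ _
        _ ≤ 1 * ‖w - d m‖ := by
            have h1 : ‖xD (φ r)‖ = ‖x (φ r)‖ := rfl
            exact mul_le_mul_of_nonneg_right (by rw [h1]; exact hx _) (norm_nonneg _)
        _ ≤ ε/4 := by
            rw [one_mul]
            have := hm
            rw [dist_eq_norm] at this
            linarith
    have h2 := hN p hp q hq
    rw [dist_eq_norm] at h2 ⊢
    calc ‖(inner ℂ (xD (φ p)) w : ℂ) - inner ℂ (xD (φ q)) w‖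
        = ‖((inner ℂ (xD (φ p)) w : ℂ) - inner ℂ (xD (φ p)) (d m))
            + ((inner ℂ (xD (φ p)) (d m) : ℂ) - inner ℂ (xD (φ q)) (d m))
            + ((inner ℂ (xD (φ q)) (d m) : ℂ) - inner ℂ (xD (φ q)) w)‖ := by congr 1; ring
      _ ≤ ‖((inner ℂ (xD (φ p)) w : ℂ) - inner ℂ (xD (φ p)) (d m))
            + ((inner ℂ (xD (φ p)) (d m) : ℂ) - inner ℂ (xD (φ q)) (d m))‖
          + ‖(inner ℂ (xD (φ q)) (d m) : ℂ) - inner ℂ (xD (φ q)) w‖ := norm_add_le _ _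
      _ ≤ ‖(inner ℂ (xD (φ p)) w : ℂ) - inner ℂ (xD (φ p)) (d m)‖
          + ‖(inner ℂ (xD (φ p)) (d m) : ℂ) - inner ℂ (xD (φ q)) (d m)‖
          + ‖(inner ℂ (xD (φ q)) (d m) : ℂ) - inner ℂ (xD (φ q)) w‖ := by
            have := norm_add_le ((inner ℂ (xD (φ p)) w : ℂ) - inner ℂ (xD (φ p)) (d m))
              ((inner ℂ (xD (φ p)) (d m) : ℂ) - inner ℂ (xD (φ q)) (d m))
            linarith
      _ < ε := by
          have k1 := key p
          have k3 := key q
          have k3' : ‖(inner ℂ (xD (φ q)) (d m) : ℂ) - inner ℂ (xD (φ q)) w‖ ≤ ε/4 := by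
            rw [norm_sub_rev]; exact k3
          linarith
  -- limits exist, define the functional
  have hlim : ∀ w : D, ∃ c : ℂ, Tendsto (fun n => (inner ℂ (xD (φ n)) w : ℂ)) atTop (𝓝 c) :=
    fun w => cauchySeq_tendsto_of_complete (hcauchy w)
  set ℓ : D → ℂ := fun w => (hlim w).choose with hℓ
  have hℓconv : ∀ w : D, Tendsto (fun n => (inner ℂ (xD (φ n)) w : ℂ)) atTop (𝓝 (ℓ w)) :=
    fun w => (hlim w).choose_spec
  have hℓadd : ∀ w w' : D, ℓ (w + w') = ℓ w + ℓ w' := by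
    intro w w'
    refine tendsto_nhds_unique (hℓconv (w + w')) ?_
    have := (hℓconv w).add (hℓconv w')
    refine this.congr fun n => ?_
    rw [← inner_add_right]
  have hℓsmul : ∀ (c : ℂ) (w : D), ℓ (c • w) = c * ℓ w := by
    intro c w
    refine tendsto_nhds_unique (hℓconv (c • w)) ?_
    have := (hℓconv w).const_mul c
    refine this.congr fun n => ?_
    rw [← inner_smul_right]
  have hℓbd : ∀ w : D, ‖ℓ w‖ ≤ 1 * ‖w‖ := by
    intro w
    have h1 : Tendsto (fun n => ‖(inner ℂ (xD (φ n)) w : ℂ)‖) atTop (𝓝 ‖ℓ w‖) := (hℓconv w).norm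
    refine le_of_tendsto h1 (Filter.Eventually.of_forall fun n => ?_)
    calc ‖(inner ℂ (xD (φ n)) w : ℂ)‖ ≤ ‖xD (φ n)‖ * ‖w‖ := norm_inner_le_norm _ _
      _ ≤ 1 * ‖w‖ := mul_le_mul_of_nonneg_right (hx _) (norm_nonneg _)
  set Fl : D →ₗ[ℂ] ℂ :=
    { toFun := ℓ
      map_add' := hℓadd
      map_smul' := fun c w => by simp only [RingHom.id_apply, smul_eq_mul]; exact hℓsmul c w }
    with hFl
  set Fc : D →L[ℂ] ℂ := Fl.mkContinuous 1 hℓbd with hFc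
  set yD : D := (InnerProductSpace.toDual ℂ D).symm Fc with hyD
  have hyDinner : ∀ w : D, (inner ℂ yD w : ℂ) = ℓ w := fun w => InnerProductSpace.toDual_symm_apply
  refine ⟨(yD : V), φ, hφ, fun w => ?_⟩
  -- reduce to the projection of w on D
  set P := orthogonalProjection D w with hP
  have hworth : w - (P : V) ∈ Dᗮ := sub_starProjection_mem_orthogonal (K := D) w
  have hsplit : ∀ v : V, v ∈ D → (inner ℂ v w : ℂ) = inner ℂ v ((P : V)) := by
    intro v hv
    have h0 : (inner ℂ v (w - (P : V)) : ℂ) = 0 := inner_right_of_mem_orthogonal hv hworth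
    rw [inner_sub_right] at h0
    linear_combination h0
  have hmain : Tendsto (fun n => (inner ℂ (x (φ n)) w : ℂ)) atTop (𝓝 (inner ℂ (yD : V) w)) := by
    have h1 : ∀ n, (inner ℂ (x (φ n)) w : ℂ) = inner ℂ (xD (φ n)) P := by
      intro n
      rw [hsplit (x (φ n)) (hmem _)]
      rfl
    have h2 : (inner ℂ (yD : V) w : ℂ) = inner ℂ yD P := by
      rw [hsplit (yD : V) yD.2]
      rfl
    rw [h2]
    rw [hyDinner P]
    exact (hℓconv P).congr fun n => (h1 n).symm
  -- conjugate to get the required orientation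
  have hconj : Tendsto (fun n => (starRingEnd ℂ) (inner ℂ (x (φ n)) w : ℂ)) atTop
      (𝓝 ((starRingEnd ℂ) (inner ℂ ((yD : V)) w))) :=
    (Complex.continuous_conj.tendsto _).comp hmain
  simp only [inner_conj_symm] at hconj
  exact hconj

end PartE

-- Part F : weak sequential compactness of the HS unit ball
section PartF
variable {H : Type} [NormedAddCommGroup H] [InnerProductSpace ℂ H] [CompleteSpace H]

lemma hs_weak_compact {S : ℕ → H →L[ℂ] H} (hS : ∀ n, IsHS (S n))
    (hSn : ∀ n, hsNorm (S n) ≤ 1) :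
    ∃ (Sl : H →L[ℂ] H) (φ : ℕ → ℕ), StrictMono φ ∧ IsHS Sl ∧
      ∀ W, IsHS W → Tendsto (fun k => hsInner (S (φ k)) W) atTop (𝓝 (hsInner Sl W)) := by
  haveI : CompleteSpace (hsSub H) := hsSub_isClosed.completeSpace_coe
  set x : ℕ → hsSub H := fun n => ⟨hsΦ (hS n), hsΦ_mem (hS n)⟩ with hx
  have hxn : ∀ n, ‖x n‖ ≤ 1 := by
    intro n
    have h1 : ‖x n‖ = ‖hsΦ (hS n)‖ := rfl
    rw [h1, ← hsNorm_eq (hS n)]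
    exact hSn n
  obtain ⟨y, φ, hφ, hy⟩ := weak_compact_seq x hxn
  obtain ⟨Sl, hSl, hSlco⟩ := y.2
  have hyΦ : hsΦ hSl = (y : lp (fun _ : hsIdx H => H) 2) := by
    ext i
    rw [hsΦ_apply, ← hSlco i]
  refine ⟨Sl, φ, hφ, hSl, fun W hW => ?_⟩
  have h1 := hy ⟨hsΦ hW, hsΦ_mem hW⟩
  have h2 : ∀ n, (inner ℂ (⟨hsΦ hW, hsΦ_mem hW⟩ : hsSub H) (x (φ n)) : ℂ)
      = hsInner (S (φ n)) W := by
    intro n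
    rw [Submodule.coe_inner, hsInner_eq (hS (φ n)) hW]
  have h3 : (inner ℂ (⟨hsΦ hW, hsΦ_mem hW⟩ : hsSub H) y : ℂ) = hsInner Sl W := by
    rw [Submodule.coe_inner, hsInner_eq hSl hW, hyΦ]
  rw [← h3]
  exact h1.congr h2
end PartF

-- Part G : the finite-dimensional side
section PartG
variable {H : Type} [NormedAddCommGroup H] [InnerProductSpace ℂ H] [CompleteSpace H]
  [FiniteDimensional ℂ H]

lemma hs_finIdx : Finite (hsIdx H) :=
  ((hsBasis H).orthonormal.linearIndependent).finite

lemma isHS_of_finite (X : H →L[ℂ] H) : IsHS X := by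
  haveI := hs_finIdx (H := H)
  exact Summable.of_finite

/-- On a finite-dimensional space, the HS norm is controlled by the operator norm. -/
lemma hsNorm_le_const : ∃ c : ℝ, 0 ≤ c ∧ ∀ X : H →L[ℂ] H, hsNorm X ≤ c * ‖X‖ := by
  haveI := hs_finIdx (H := H)
  haveI : Fintype (hsIdx H) := Fintype.ofFinite _
  refine ⟨Real.sqrt (Fintype.card (hsIdx H)), Real.sqrt_nonneg _, fun X => ?_⟩
  rw [hsNorm, tsum_fintype]
  have hbd : ∀ i : hsIdx H, ‖X (hsBasis H i)‖ ^ 2 ≤ ‖X‖ ^ 2 := by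
    intro i
    have h1 : ‖X (hsBasis H i)‖ ≤ ‖X‖ * ‖(hsBasis H) i‖ := X.le_opNorm _
    have h2 : ‖(hsBasis H) i‖ = 1 := (hsBasis H).orthonormal.1 i
    rw [h2, mul_one] at h1
    exact pow_le_pow_left₀ (norm_nonneg _) h1 2
  have hsum : (∑ i : hsIdx H, ‖X (hsBasis H i)‖ ^ 2)
      ≤ (Fintype.card (hsIdx H) : ℝ) * ‖X‖ ^ 2 := by
    calc (∑ i : hsIdx H, ‖X (hsBasis H i)‖ ^ 2) ≤ ∑ _i : hsIdx H, ‖X‖ ^ 2 :=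
          Finset.sum_le_sum fun i _ => hbd i
      _ = (Fintype.card (hsIdx H) : ℝ) * ‖X‖ ^ 2 := by
          rw [Finset.sum_const, Finset.card_univ, nsmul_eq_mul]
  calc Real.sqrt (∑ i : hsIdx H, ‖X (hsBasis H i)‖ ^ 2)
      ≤ Real.sqrt ((Fintype.card (hsIdx H) : ℝ) * ‖X‖ ^ 2) := Real.sqrt_le_sqrt hsum
    _ = Real.sqrt (Fintype.card (hsIdx H)) * ‖X‖ := by
        rw [Real.sqrt_mul (Nat.cast_nonneg _), Real.sqrt_sq (norm_nonneg _)]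

/-- Norm-compactness extraction for a bounded sequence of operators on a
finite-dimensional space. -/
lemma hs_norm_compact {T : ℕ → H →L[ℂ] H} (hTn : ∀ n, hsNorm (T n) ≤ 1) :
    ∃ (Tl : H →L[ℂ] H) (ρ : ℕ → ℕ), StrictMono ρ ∧ IsHS Tl ∧
      Tendsto (fun k => hsNorm (T (ρ k) - Tl)) atTop (𝓝 0) := by
  haveI : FiniteDimensional ℂ (H →L[ℂ] H) := inferInstance
  haveI : ProperSpace (H →L[ℂ] H) := FiniteDimensional.proper ℂ _
  have hmem : ∀ n, T n ∈ Metric.closedBall (0 : H →L[ℂ] H) 1 := by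
    intro n
    rw [Metric.mem_closedBall, dist_zero_right]
    exact (opNorm_le_hsNorm (isHS_of_finite (T n))).trans (hTn n)
  obtain ⟨Tl, -, ρ, hρ, hconv⟩ := (isCompact_closedBall (0 : H →L[ℂ] H) 1).tendsto_subseq hmem
  obtain ⟨c, hc0, hc⟩ := hsNorm_le_const (H := H)
  refine ⟨Tl, ρ, hρ, isHS_of_finite Tl, ?_⟩
  have hop : Tendsto (fun k => ‖T (ρ k) - Tl‖) atTop (𝓝 0) := by
    have h1 : Tendsto (fun k => T (ρ k) - Tl) atTop (𝓝 (Tl - Tl)) :=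
      (hconv.sub tendsto_const_nhds)
    rw [sub_self] at h1
    simpa using h1.norm
  refine squeeze_zero (fun k => hsNorm_nonneg _) (fun k => hc _) ?_
  have := hop.const_mul c
  simpa using this
end PartG

variable {H₁ H₂ : Type} [NormedAddCommGroup H₁] [InnerProductSpace ℂ H₁] [CompleteSpace H₁]
  [NormedAddCommGroup H₂] [InnerProductSpace ℂ H₂] [CompleteSpace H₂]

/-- `m` is a bounded bilinear form on `S_2(H₁) × S_2(H₂)`. -/
structure IsHSBilinearForm (m : (H₁ →L[ℂ] H₁) → (H₂ →L[ℂ] H₂) → ℂ) : Prop where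
  add_left : ∀ S S' T, IsHS S → IsHS S' → IsHS T → m (S + S') T = m S T + m S' T
  smul_left : ∀ (c : ℂ) S T, IsHS S → IsHS T → m (c • S) T = c * m S T
  add_right : ∀ S T T', IsHS S → IsHS T → IsHS T' → m S (T + T') = m S T + m S T'
  smul_right : ∀ (c : ℂ) S T, IsHS S → IsHS T → m S (c • T) = c * m S T
  bound : ∃ C : ℝ, ∀ S T, IsHS S → IsHS T → ‖m S T‖ ≤ C * hsNorm S * hsNorm T

/-- Let `H₁`, `H₂` be complex Hilbert spaces with `H₂` finite-dimensional and
let `m` be a bounded bilinear form on `S_2(H₁) × S_2(H₂)`. For all sequences `(S i)`, `(S' j)`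
in the closed unit ball of `S_2(H₁)` and `(T i)`, `(T' j)` in the closed unit ball of `S_2(H₂)`
such that both iterated limits of `m (Sᵢ S̃ⱼ) (Tᵢ T̃ⱼ)` exist, there are weak limits `Sl, S'l` of
subsequences of `(S i)`, `(S' j)` and norm limits `Tl, T'l` of subsequences of `(T i)`, `(T' j)`
such that both iterated limits equal `m (Sl * S'l) (Tl * T'l)`; in particular they are equal,
i.e. `m` is biregular. -/
theorem biregular_of_finiteDimensional_right
    [FiniteDimensional ℂ H₂]
    (m : (H₁ →L[ℂ] H₁) → (H₂ →L[ℂ] H₂) → ℂ) (hm : IsHSBilinearForm m)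
    (S S' : ℕ → H₁ →L[ℂ] H₁) (T T' : ℕ → H₂ →L[ℂ] H₂)
    (hS : ∀ i, IsHS (S i) ∧ hsNorm (S i) ≤ 1) (hS' : ∀ j, IsHS (S' j) ∧ hsNorm (S' j) ≤ 1)
    (hT : ∀ i, IsHS (T i) ∧ hsNorm (T i) ≤ 1) (hT' : ∀ j, IsHS (T' j) ∧ hsNorm (T' j) ≤ 1)
    (g h : ℕ → ℂ) (L₁ L₂ : ℂ)
    (hg : ∀ i, Tendsto (fun j => m (S i * S' j) (T i * T' j)) atTop (𝓝 (g i)))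
    (hgL : Tendsto g atTop (𝓝 L₁))
    (hh : ∀ j, Tendsto (fun i => m (S i * S' j) (T i * T' j)) atTop (𝓝 (h j)))
    (hhL : Tendsto h atTop (𝓝 L₂)) :
    ∃ (Sl S'l : H₁ →L[ℂ] H₁) (Tl T'l : H₂ →L[ℂ] H₂) (φ ψ ρ τ : ℕ → ℕ),
      StrictMono φ ∧ StrictMono ψ ∧ StrictMono ρ ∧ StrictMono τ ∧
      IsHS Sl ∧ IsHS S'l ∧ IsHS Tl ∧ IsHS T'l ∧
      (∀ W, IsHS W → Tendsto (fun k => hsInner (S (φ k)) W) atTop (𝓝 (hsInner Sl W))) ∧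
      (∀ W, IsHS W → Tendsto (fun k => hsInner (S' (ψ k)) W) atTop (𝓝 (hsInner S'l W))) ∧
      Tendsto (fun k => hsNorm (T (ρ k) - Tl)) atTop (𝓝 0) ∧
      Tendsto (fun k => hsNorm (T' (τ k) - T'l)) atTop (𝓝 0) ∧
      L₁ = m (Sl * S'l) (Tl * T'l) ∧ L₂ = m (Sl * S'l) (Tl * T'l) ∧ L₁ = L₂ := by
  
  classical
  -- every operator on the finite-dimensional space H₂ is Hilbert–Schmidt
  have hHS₂ : ∀ X : H₂ →L[ℂ] H₂, IsHS X := isHS_of_finite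
  -- a nonnegative bound constant
  obtain ⟨C, hC⟩ := hm.bound
  set C₀ : ℝ := max C 0 with hC₀
  have hC₀0 : 0 ≤ C₀ := le_max_right _ _
  have hbound : ∀ A B, IsHS A → IsHS B → ‖m A B‖ ≤ C₀ * hsNorm A * hsNorm B := by
    intro A B hA hB
    refine (hC A B hA hB).trans ?_
    have := mul_nonneg (hsNorm_nonneg A) (hsNorm_nonneg B)
    calc C * hsNorm A * hsNorm B = C * (hsNorm A * hsNorm B) := by ring
      _ ≤ C₀ * (hsNorm A * hsNorm B) := mul_le_mul_of_nonneg_right (le_max_left _ _) this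
      _ = C₀ * hsNorm A * hsNorm B := by ring
  -- extraction on the i-side
  obtain ⟨Tl, ρ₁, hρ₁, hTl, hTlconv⟩ := hs_norm_compact (fun i => (hT i).2)
  obtain ⟨Sl, σ₁, hσ₁, hSl, hSlconv⟩ :=
    hs_weak_compact (fun k => (hS (ρ₁ k)).1) (fun k => (hS (ρ₁ k)).2)
  set φ : ℕ → ℕ := fun k => ρ₁ (σ₁ k) with hφdef
  have hφ : StrictMono φ := hρ₁.comp hσ₁
  have hTφ : Tendsto (fun k => hsNorm (T (φ k) - Tl)) atTop (𝓝 0) :=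
    hTlconv.comp hσ₁.tendsto_atTop
  -- extraction on the j-side
  obtain ⟨T'l, ρ₂, hρ₂, hT'l, hT'lconv⟩ := hs_norm_compact (fun j => (hT' j).2)
  obtain ⟨S'l, σ₂, hσ₂, hS'l, hS'lconv⟩ :=
    hs_weak_compact (fun k => (hS' (ρ₂ k)).1) (fun k => (hS' (ρ₂ k)).2)
  set ψ : ℕ → ℕ := fun k => ρ₂ (σ₂ k) with hψdef
  have hψ : StrictMono ψ := hρ₂.comp hσ₂
  have hT'ψ : Tendsto (fun k => hsNorm (T' (ψ k) - T'l)) atTop (𝓝 0) :=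
    hT'lconv.comp hσ₂.tendsto_atTop
  -- perturbation principle in the second variable
  have key : ∀ (A : ℕ → H₁ →L[ℂ] H₁) (B : ℕ → H₂ →L[ℂ] H₂)
      (A₁ : H₁ →L[ℂ] H₁) (B₁ : H₂ →L[ℂ] H₂) (c : ℝ),
      (∀ k, IsHS (A k)) → (∀ k, hsNorm (A k) ≤ c) →
      Tendsto (fun k => hsNorm (B k - B₁)) atTop (𝓝 0) →
      Tendsto (fun k => m (A k) B₁) atTop (𝓝 (m A₁ B₁)) →
      Tendsto (fun k => m (A k) (B k)) atTop (𝓝 (m A₁ B₁)) := by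
    intro A B A₁ B₁ c hA hAc hB hlim
    have hrew : ∀ k, m (A k) (B k) = m (A k) (B k - B₁) + m (A k) B₁ := by
      intro k
      have h1 : (B k - B₁) + B₁ = B k := by abel
      have h2 := hm.add_right (A k) (B k - B₁) B₁ (hA k) (hHS₂ _) (hHS₂ _)
      rw [h1] at h2
      exact h2
    have hzero : Tendsto (fun k => m (A k) (B k - B₁)) atTop (𝓝 0) := by
      refine squeeze_zero_norm (a := fun k => (C₀ * c) * hsNorm (B k - B₁))
        (fun k => ?_) ?_
      · calc ‖m (A k) (B k - B₁)‖ ≤ C₀ * hsNorm (A k) * hsNorm (B k - B₁) :=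
              hbound _ _ (hA k) (hHS₂ _)
          _ ≤ (C₀ * c) * hsNorm (B k - B₁) := by
              refine mul_le_mul_of_nonneg_right ?_ (hsNorm_nonneg _)
              exact mul_le_mul_of_nonneg_left (hAc k) hC₀0
      · simpa using hB.const_mul (C₀ * c)
    have hsum := hzero.add hlim
    rw [zero_add] at hsum
    exact hsum.congr fun k => (hrew k).symm
  -- weak convergence in the first variable, j-side
  have weakR : ∀ (A₀ : H₁ →L[ℂ] H₁) (B₁ : H₂ →L[ℂ] H₂), IsHS A₀ →
      Tendsto (fun k => m (A₀ * S' (ψ k)) B₁) atTop (𝓝 (m (A₀ * S'l) B₁)) := by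
    intro A₀ B₁ hA₀
    obtain ⟨M, hM, hMrep⟩ := hs_riesz (f0 := fun A => m A B₁) (C := C₀ * hsNorm B₁)
      (fun A A' hA hA' => hm.add_left A A' B₁ hA hA' (hHS₂ B₁))
      (fun c A hA => hm.smul_left c A B₁ hA (hHS₂ B₁))
      (fun A hA => by
        calc ‖m A B₁‖ ≤ C₀ * hsNorm A * hsNorm B₁ := hbound A B₁ hA (hHS₂ _)
          _ = (C₀ * hsNorm B₁) * hsNorm A := by ring)
    have hrw : ∀ k, m (A₀ * S' (ψ k)) B₁
        = hsInner (S' (ψ k)) (ContinuousLinearMap.adjoint A₀ * M) := by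
      intro k
      rw [hMrep _ (((hS' (ψ k)).1).comp_left A₀), hsInner_mul_left]
    have hrw2 : m (A₀ * S'l) B₁ = hsInner S'l (ContinuousLinearMap.adjoint A₀ * M) := by
      rw [hMrep _ (hS'l.comp_left A₀), hsInner_mul_left]
    rw [hrw2]
    exact (hS'lconv _ (hM.comp_left _)).congr fun k => (hrw k).symm
  -- weak convergence in the first variable, i-side
  have weakL : ∀ (B₀ : H₁ →L[ℂ] H₁) (B₁ : H₂ →L[ℂ] H₂), IsHS B₀ →
      Tendsto (fun k => m (S (φ k) * B₀) B₁) atTop (𝓝 (m (Sl * B₀) B₁)) := by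
    intro B₀ B₁ hB₀
    obtain ⟨M, hM, hMrep⟩ := hs_riesz (f0 := fun A => m A B₁) (C := C₀ * hsNorm B₁)
      (fun A A' hA hA' => hm.add_left A A' B₁ hA hA' (hHS₂ B₁))
      (fun c A hA => hm.smul_left c A B₁ hA (hHS₂ B₁))
      (fun A hA => by
        calc ‖m A B₁‖ ≤ C₀ * hsNorm A * hsNorm B₁ := hbound A B₁ hA (hHS₂ _)
          _ = (C₀ * hsNorm B₁) * hsNorm A := by ring)
    have hrw : ∀ k, m (S (φ k) * B₀) B₁
        = hsInner (S (φ k)) (M * ContinuousLinearMap.adjoint B₀) := by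
      intro k
      rw [hMrep _ ((hS (φ k)).1.comp_right B₀),
        hsInner_mul_right B₀ (hS (φ k)).1 hM]
    have hrw2 : m (Sl * B₀) B₁ = hsInner Sl (M * ContinuousLinearMap.adjoint B₀) := by
      rw [hMrep _ (hSl.comp_right B₀), hsInner_mul_right B₀ hSl hM]
    rw [hrw2]
    exact (hSlconv _ (hM.comp_right _)).congr fun k => (hrw k).symm
  -- unit bounds
  have hSnorm1 : ∀ i, ‖S i‖ ≤ 1 := fun i => (opNorm_le_hsNorm (hS i).1).trans (hS i).2
  have hTnorm1 : ∀ i, ‖T i‖ ≤ 1 := fun i => (opNorm_le_hsNorm (hT i).1).trans (hT i).2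
  -- Step 1 : identify g i
  have step1 : ∀ i, g i = m (S i * S'l) (T i * T'l) := by
    intro i
    have hfull : Tendsto (fun k => m (S i * S' (ψ k)) (T i * T' (ψ k))) atTop (𝓝 (g i)) :=
      (hg i).comp hψ.tendsto_atTop
    have hBnoise : Tendsto (fun k => hsNorm (T i * T' (ψ k) - T i * T'l)) atTop (𝓝 0) := by
      refine squeeze_zero (g := fun k => hsNorm (T' (ψ k) - T'l))
        (fun k => hsNorm_nonneg _) (fun k => ?_) ?_
      · rw [← mul_sub]
        refine (hsNorm_comp_le (T i) ((hT' (ψ k)).1.sub hT'l)).trans ?_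
        calc ‖T i‖ * hsNorm (T' (ψ k) - T'l) ≤ 1 * hsNorm (T' (ψ k) - T'l) :=
              mul_le_mul_of_nonneg_right (hTnorm1 i) (hsNorm_nonneg _)
          _ = hsNorm (T' (ψ k) - T'l) := one_mul _
      · exact hT'ψ
    have h2 : Tendsto (fun k => m (S i * S' (ψ k)) (T i * T' (ψ k))) atTop
        (𝓝 (m (S i * S'l) (T i * T'l))) := by
      refine key _ _ _ _ 1 (fun k => (hS' (ψ k)).1.comp_left (S i)) (fun k => ?_) hBnoise
        (weakR (S i) (T i * T'l) (hS i).1)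
      calc hsNorm (S i * S' (ψ k)) ≤ ‖S i‖ * hsNorm (S' (ψ k)) :=
            hsNorm_comp_le _ (hS' (ψ k)).1
        _ ≤ 1 * 1 := mul_le_mul (hSnorm1 i) (hS' (ψ k)).2 (hsNorm_nonneg _) zero_le_one
        _ = 1 := one_mul 1
    exact tendsto_nhds_unique hfull h2
  -- Step 2 : L₁
  have step2 : L₁ = m (Sl * S'l) (Tl * T'l) := by
    have hsub : Tendsto (fun k => g (φ k)) atTop (𝓝 L₁) := hgL.comp hφ.tendsto_atTop
    have hsub2 : Tendsto (fun k => m (S (φ k) * S'l) (T (φ k) * T'l)) atTop (𝓝 L₁) :=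
      hsub.congr fun k => step1 (φ k)
    have hBnoise : Tendsto (fun k => hsNorm (T (φ k) * T'l - Tl * T'l)) atTop (𝓝 0) := by
      refine squeeze_zero (g := fun k => hsNorm (T (φ k) - Tl) * hsNorm T'l)
        (fun k => hsNorm_nonneg _) (fun k => ?_) ?_
      · rw [← sub_mul]
        refine (hsNorm_comp_le (T (φ k) - Tl) hT'l).trans ?_
        exact mul_le_mul_of_nonneg_right
          (opNorm_le_hsNorm ((hT (φ k)).1.sub hTl)) (hsNorm_nonneg _)
      · simpa using hTφ.mul_const (hsNorm T'l)
    have h2 : Tendsto (fun k => m (S (φ k) * S'l) (T (φ k) * T'l)) atTop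
        (𝓝 (m (Sl * S'l) (Tl * T'l))) := by
      refine key _ _ _ _ (hsNorm S'l) (fun k => hS'l.comp_left (S (φ k))) (fun k => ?_)
        hBnoise (weakL S'l (Tl * T'l) hS'l)
      refine (hsNorm_comp_le _ hS'l).trans ?_
      calc ‖S (φ k)‖ * hsNorm S'l ≤ 1 * hsNorm S'l :=
            mul_le_mul_of_nonneg_right (hSnorm1 _) (hsNorm_nonneg _)
        _ = hsNorm S'l := one_mul _
    exact tendsto_nhds_unique hsub2 h2
  -- Step 3 : identify h j
  have step3 : ∀ j, h j = m (Sl * S' j) (Tl * T' j) := by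
    intro j
    have hfull : Tendsto (fun k => m (S (φ k) * S' j) (T (φ k) * T' j)) atTop (𝓝 (h j)) :=
      (hh j).comp hφ.tendsto_atTop
    have hBnoise : Tendsto (fun k => hsNorm (T (φ k) * T' j - Tl * T' j)) atTop (𝓝 0) := by
      refine squeeze_zero (g := fun k => hsNorm (T (φ k) - Tl) * 1)
        (fun k => hsNorm_nonneg _) (fun k => ?_) ?_
      · rw [← sub_mul]
        refine (hsNorm_comp_le (T (φ k) - Tl) (hT' j).1).trans ?_
        refine mul_le_mul (opNorm_le_hsNorm ((hT (φ k)).1.sub hTl)) (hT' j).2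
          (hsNorm_nonneg _) (hsNorm_nonneg _)
      · simpa using hTφ.mul_const (1:ℝ)
    have h2 : Tendsto (fun k => m (S (φ k) * S' j) (T (φ k) * T' j)) atTop
        (𝓝 (m (Sl * S' j) (Tl * T' j))) := by
      refine key _ _ _ _ 1 (fun k => (hS' j).1.comp_left (S (φ k))) (fun k => ?_)
        hBnoise (weakL (S' j) (Tl * T' j) (hS' j).1)
      calc hsNorm (S (φ k) * S' j) ≤ ‖S (φ k)‖ * hsNorm (S' j) :=
            hsNorm_comp_le _ (hS' j).1
        _ ≤ 1 * 1 := mul_le_mul (hSnorm1 _) (hS' j).2 (hsNorm_nonneg _) zero_le_one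
        _ = 1 := one_mul 1
    exact tendsto_nhds_unique hfull h2
  -- Step 4 : L₂
  have step4 : L₂ = m (Sl * S'l) (Tl * T'l) := by
    have hsub : Tendsto (fun k => h (ψ k)) atTop (𝓝 L₂) := hhL.comp hψ.tendsto_atTop
    have hsub2 : Tendsto (fun k => m (Sl * S' (ψ k)) (Tl * T' (ψ k))) atTop (𝓝 L₂) :=
      hsub.congr fun k => step3 (ψ k)
    have hBnoise : Tendsto (fun k => hsNorm (Tl * T' (ψ k) - Tl * T'l)) atTop (𝓝 0) := by
      refine squeeze_zero (g := fun k => ‖Tl‖ * hsNorm (T' (ψ k) - T'l))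
        (fun k => hsNorm_nonneg _) (fun k => ?_) ?_
      · rw [← mul_sub]
        exact hsNorm_comp_le Tl ((hT' (ψ k)).1.sub hT'l)
      · simpa using hT'ψ.const_mul ‖Tl‖
    have h2 : Tendsto (fun k => m (Sl * S' (ψ k)) (Tl * T' (ψ k))) atTop
        (𝓝 (m (Sl * S'l) (Tl * T'l))) := by
      refine key _ _ _ _ ‖Sl‖ (fun k => (hS' (ψ k)).1.comp_left Sl) (fun k => ?_)
        hBnoise (weakR Sl (Tl * T'l) hSl)
      refine (hsNorm_comp_le Sl (hS' (ψ k)).1).trans ?_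
      calc ‖Sl‖ * hsNorm (S' (ψ k)) ≤ ‖Sl‖ * 1 :=
            mul_le_mul_of_nonneg_left (hS' (ψ k)).2 (norm_nonneg _)
        _ = ‖Sl‖ := mul_one _
    exact tendsto_nhds_unique hsub2 h2
  exact ⟨Sl, S'l, Tl, T'l, φ, ψ, φ, ψ, hφ, hψ, hφ, hψ, hSl, hS'l, hTl, hT'l,
    hSlconv, hS'lconv, hTφ, hT'ψ, step2, step4, step2.trans step4.symm⟩
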